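/- Let (χ, μ) be a probability space and Logit: χ × χ → ℝ a bounded measurable function, with attention kernel Att(u, z) = exp(Logit(u, z)) / ∫_χ exp(Logit(u, z')) dμ(z'). Suppose x, y ∈ χ and L, r ≥ 0 satisfy |Logit(x, z) − Logit(y, z)| ≤ L·r for every z ∈ χ. Then for every z ∈ χ: (i) exp(Logit(x, z))/exp(Logit(y, z)) ∈ [e^{−Lr}, e^{Lr}]; (ii) Att(x, z)/Att(y, z) ∈ [e^{−2Lr}, e^{2Lr}]; and (iii) if additionaly L·r ≤ 1/2, then |Att(x, z)/Att(y, z) − 1| ≤ 4·L·r. -/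

import Mathlib

open MeasureTheory

lemma exp_le_one_add_two_mul {s : ℝ} (h0 : 0 ≤ s) (h1 : s ≤ 1) : Real.exp s ≤ 1 + 2*s := by
  have h := convexOn_exp.2 (Set.mem_univ (0:ℝ)) (Set.mem_univ 1)
      (by linarith : (0:ℝ) ≤ 1 - s) h0 (by ring)
  simp [smul_eq_mul] at h
  have he : Real.exp 1 ≤ 3 := by
    have := Real.exp_one_lt_d9; linarith
  nlinarith [h]

/-- Comparing attention at two close points: if the logits at `x` and `y` differ by at
most `L*r` uniformly, then the ratio of exponentials lies in `[e^(-Lr), e^(Lr)]`, the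
ratio of softmax attention kernels lies in `[e^(-2Lr), e^(2Lr)]`, and (when `L*r ≤ 1/2`)
the attention ratio is within `4*L*r` of `1`. -/
theorem stmt2
    {χ : Type*} [MeasurableSpace χ] (μ : Measure χ) [IsProbabilityMeasure μ]
    (Logit : χ → χ → ℝ)
    (hmeas : Measurable fun q : χ × χ => Logit q.1 q.2)
    (hbdd : ∃ M : ℝ, ∀ u z, |Logit u z| ≤ M)
    (x y : χ) (L r : ℝ) (hL : 0 ≤ L) (hr : 0 ≤ r)
    (hclose : ∀ z, |Logit x z - Logit y z| ≤ L * r) :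
    ∀ z : χ,
      (Real.exp (Logit x z) / Real.exp (Logit y z) ∈
        Set.Icc (Real.exp (-(L * r))) (Real.exp (L * r))) ∧
      ((Real.exp (Logit x z) / ∫ z', Real.exp (Logit x z') ∂μ) /
         (Real.exp (Logit y z) / ∫ z', Real.exp (Logit y z') ∂μ) ∈
        Set.Icc (Real.exp (-(2 * L * r))) (Real.exp (2 * L * r))) ∧
      (L * r ≤ 1 / 2 →
        |(Real.exp (Logit x z) / ∫ z', Real.exp (Logit x z') ∂μ) /
           (Real.exp (Logit y z) / ∫ z', Real.exp (Logit y z') ∂μ) - 1| ≤ 4 * (L * r)) := by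
  obtain ⟨M, hM⟩ := hbdd
  have hmeas' : ∀ u, Measurable (fun z => Logit u z) :=
    fun u => hmeas.comp (measurable_const.prodMk measurable_id)
  have hint : ∀ u, Integrable (fun z => Real.exp (Logit u z)) μ := by
    intro u
    refine (integrable_const (Real.exp M)).mono'
      ((Real.measurable_exp.comp (hmeas' u)).aestronglyMeasurable) ?_
    filter_upwards with z
    rw [Real.norm_eq_abs, abs_of_pos (Real.exp_pos _)]
    exact Real.exp_le_exp.mpr (le_trans (le_abs_self _) (hM u z))
  have hpos : ∀ u, 0 < ∫ z, Real.exp (Logit u z) ∂μ := by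
    intro u
    have h := integral_mono (integrable_const (Real.exp (-M))) (hint u)
      (fun z => Real.exp_le_exp.mpr ((abs_le.mp (hM u z)).1))
    simp only [integral_const, measure_univ, ENNReal.toReal_one, probReal_univ, one_smul] at h
    exact lt_of_lt_of_le (Real.exp_pos _) h
  have hcomp : ∀ u v : χ, (∀ z, Logit u z - Logit v z ≤ L * r) →
      (∫ z, Real.exp (Logit u z) ∂μ) ≤ Real.exp (L*r) * ∫ z, Real.exp (Logit v z) ∂μ := by
    intro u v h
    rw [← integral_const_mul]
    refine integral_mono (hint u) ((hint v).const_mul _) (fun z => ?_)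
    rw [← Real.exp_add]
    exact Real.exp_le_exp.mpr (by linarith [h z])
  set Ix := ∫ z, Real.exp (Logit x z) ∂μ
  set Iy := ∫ z, Real.exp (Logit y z) ∂μ
  have hIx := hpos x
  have hIy := hpos y
  have hxy : Ix ≤ Real.exp (L*r) * Iy :=
    hcomp x y (fun z => le_trans (le_abs_self _) (hclose z))
  have hyx : Iy ≤ Real.exp (L*r) * Ix :=
    hcomp y x (fun z => by have := abs_le.mp (hclose z); linarith)
  intro z
  have hab := abs_le.mp (hclose z)
  have h1 : Real.exp (Logit x z) / Real.exp (Logit y z) = Real.exp (Logit x z - Logit y z) :=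
    (Real.exp_sub _ _).symm
  have p1 : Real.exp (Logit x z) / Real.exp (Logit y z) ∈
      Set.Icc (Real.exp (-(L * r))) (Real.exp (L * r)) := by
    rw [h1]
    exact ⟨Real.exp_le_exp.mpr (by linarith [hab.1]), Real.exp_le_exp.mpr hab.2⟩
  have hR : (Real.exp (Logit x z) / Ix) / (Real.exp (Logit y z) / Iy)
      = Real.exp (Logit x z - Logit y z) * (Iy / Ix) := by
    rw [Real.exp_sub]
    field_simp
  have hratio_ub : Iy / Ix ≤ Real.exp (L*r) := by
    rw [div_le_iff₀ hIx]; exact hyx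
  have hee : Real.exp (-(L*r)) * Real.exp (L*r) = 1 := by
    rw [← Real.exp_add]; simp
  have hratio_lb : Real.exp (-(L*r)) ≤ Iy / Ix := by
    rw [le_div_iff₀ hIx]
    nlinarith [Real.exp_pos (-(L*r))]
  have elb : Real.exp (-(L*r)) ≤ Real.exp (Logit x z - Logit y z) :=
    Real.exp_le_exp.mpr (by linarith [hab.1])
  have eub : Real.exp (Logit x z - Logit y z) ≤ Real.exp (L*r) :=
    Real.exp_le_exp.mpr hab.2
  have p2 : (Real.exp (Logit x z) / Ix) / (Real.exp (Logit y z) / Iy) ∈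
      Set.Icc (Real.exp (-(2 * L * r))) (Real.exp (2 * L * r)) := by
    rw [hR]
    constructor
    · calc Real.exp (-(2*L*r)) = Real.exp (-(L*r)) * Real.exp (-(L*r)) := by
            rw [← Real.exp_add]; ring_nf
        _ ≤ Real.exp (Logit x z - Logit y z) * (Iy / Ix) :=
            mul_le_mul elb hratio_lb (Real.exp_pos _).le (Real.exp_pos _).le
    · calc Real.exp (Logit x z - Logit y z) * (Iy / Ix)
          ≤ Real.exp (L*r) * Real.exp (L*r) :=
            mul_le_mul eub hratio_ub (div_nonneg hIy.le hIx.le) (Real.exp_pos _).le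
        _ = Real.exp (2*L*r) := by rw [← Real.exp_add]; ring_nf
  refine ⟨p1, p2, fun hhalf => ?_⟩
  set R := (Real.exp (Logit x z) / Ix) / (Real.exp (Logit y z) / Iy) with hRdef
  have hs0 : 0 ≤ 2*L*r := by nlinarith
  have hs1 : 2*L*r ≤ 1 := by linarith
  have hup : Real.exp (2*L*r) ≤ 1 + 2*(2*L*r) := exp_le_one_add_two_mul hs0 hs1
  have hlo : 1 - 2*L*r ≤ Real.exp (-(2*L*r)) := by
    have := Real.add_one_le_exp (-(2*L*r)); linarith
  have h2 := p2.1
  have h3 := p2.2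
  rw [abs_le]
  constructor <;> nlinarith
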